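/- Suppose N ≥ 3 and let κ, ω ∈ ℚ^N × ℚ^N × W be such that ω is not a rational multiple of κ. Then there exists t ∈ ℚ^N × ℚ^N × W with B(t, t) = 0, B(t, κ) = 0 and B(t, ω) ≠ 0. -/

import Mathlib

/-- The even indefinite unimodular form: `N` hyperbolic pairs plus a definite summand
`(W, B_W)`:  `B((a,b,T),(a',b',T')) = Σ (a_j b'_j + a'_j b_j) + B_W(T,T')`. -/
def Beven (N : ℕ) {W : Type*} [AddCommGroup W] [Module ℚ W]
    (BW : W →ₗ[ℚ] W →ₗ[ℚ] ℚ)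
    (u v : (Fin N → ℚ) × (Fin N → ℚ) × W) : ℚ :=
  (∑ j : Fin N, (u.1 j * v.2.1 j + v.1 j * u.2.1 j)) + BW u.2.2 v.2.2

section Aux
variable {N : ℕ} {W : Type*} [AddCommGroup W] [Module ℚ W]

lemma sum_single_mul (i : Fin N) (c : ℚ) (g : Fin N → ℚ) :
    ∑ k, (Pi.single i c : Fin N → ℚ) k * g k = c * g i := by
  simp [Pi.single_apply, ite_mul]

lemma sum_mul_single (i : Fin N) (c : ℚ) (g : Fin N → ℚ) :
    ∑ k, g k * (Pi.single i c : Fin N → ℚ) k = g i * c := by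
  simp [Pi.single_apply, mul_ite]

lemma Beven_pair (BW : W →ₗ[ℚ] W →ₗ[ℚ] ℚ) {i j : Fin N}
    (a1 a2 b1 b2 : ℚ) (T : W) (v : (Fin N → ℚ) × (Fin N → ℚ) × W) :
    Beven N BW (Pi.single i a1 + Pi.single j a2, Pi.single i b1 + Pi.single j b2, T) v
      = a1 * v.2.1 i + a2 * v.2.1 j + v.1 i * b1 + v.1 j * b2 + BW T v.2.2 := by
  unfold Beven
  simp only [Pi.add_apply, add_mul, mul_add, Finset.sum_add_distrib,
    sum_single_mul, sum_mul_single]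
  ring

lemma Beven_pair_self (BW : W →ₗ[ℚ] W →ₗ[ℚ] ℚ) {i j : Fin N} (hij : i ≠ j)
    (a1 a2 b1 b2 : ℚ) (T : W) :
    Beven N BW (Pi.single i a1 + Pi.single j a2, Pi.single i b1 + Pi.single j b2, T)
      (Pi.single i a1 + Pi.single j a2, Pi.single i b1 + Pi.single j b2, T)
      = 2*(a1*b1) + 2*(a2*b2) + BW T T := by
  rw [Beven_pair BW]
  simp [Pi.single_eq_same, Pi.single_eq_of_ne hij, Pi.single_eq_of_ne hij.symm]
  ring
end Aux

/-- Section 3d, spin case.  If `N ≥ 3`, `B_W` is symmetric and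
definite, and `ω` is not a rational multiple of `κ`, then there is `t` with
`B(t,t) = 0`, `B(t,κ) = 0` and `B(t,ω) ≠ 0`. -/
theorem exists_isotropic_class_even (N : ℕ) (hN : 3 ≤ N)
    {W : Type*} [AddCommGroup W] [Module ℚ W] [FiniteDimensional ℚ W]
    (BW : W →ₗ[ℚ] W →ₗ[ℚ] ℚ)
    (hsymm : ∀ x y : W, BW x y = BW y x)
    (hdef : (∀ T : W, T ≠ 0 → 0 < BW T T) ∨ (∀ T : W, T ≠ 0 → BW T T < 0))
    (κ ω : (Fin N → ℚ) × (Fin N → ℚ) × W) (hω : ∀ c : ℚ, ω ≠ c • κ) :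
    ∃ t : (Fin N → ℚ) × (Fin N → ℚ) × W,
      Beven N BW t t = 0 ∧ Beven N BW t κ = 0 ∧ Beven N BW t ω ≠ 0 := by
  have hBW0 : ∀ T : W, BW T T = 0 → T = 0 := by
    intro T hT
    by_contra hne
    rcases hdef with h | h
    · exact absurd hT (ne_of_gt (h T hne))
    · exact absurd hT (ne_of_lt (h T hne))
  by_contra hcon
  push_neg at hcon
  have hnt : Nontrivial (Fin N) := Fin.nontrivial_iff_two_le.mpr (by omega)
  have key : ∀ (i j : Fin N), i ≠ j → ∀ (a1 a2 b1 b2 : ℚ) (T : W),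
      2*(a1*b1) + 2*(a2*b2) + BW T T = 0 →
      a1 * κ.2.1 i + a2 * κ.2.1 j + κ.1 i * b1 + κ.1 j * b2 + BW T κ.2.2 = 0 →
      a1 * ω.2.1 i + a2 * ω.2.1 j + ω.1 i * b1 + ω.1 j * b2 + BW T ω.2.2 = 0 := by
    intro i j hij a1 a2 b1 b2 T h1 h2
    have := hcon (Pi.single i a1 + Pi.single j a2, Pi.single i b1 + Pi.single j b2, T)
      (by rw [Beven_pair_self BW hij]; exact h1)
      (by rw [Beven_pair BW]; exact h2)
    rwa [Beven_pair BW] at this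
  have final : ∀ c : ℚ, (∀ k, ω.1 k = c * κ.1 k) → (∀ k, ω.2.1 k = c * κ.2.1 k) →
      ω.2.2 = c • κ.2.2 → False := by
    intro c h1 h2 h3
    apply hω c
    refine Prod.ext (funext fun k => ?_) (Prod.ext (funext fun k => ?_) ?_)
    · simpa using h1 k
    · simpa using h2 k
    · simpa using h3
  have hU_of : ∀ c : ℚ, (∀ T : W, BW T ω.2.2 - c * BW T κ.2.2 = 0) →
      ω.2.2 = c • κ.2.2 := by
    intro c hT
    have expand : ∀ X : W, BW X (ω.2.2 - c • κ.2.2) = BW X ω.2.2 - c * BW X κ.2.2 :=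
      fun X => by rw [map_sub, map_smul, smul_eq_mul]
    have hTT : BW (ω.2.2 - c • κ.2.2) (ω.2.2 - c • κ.2.2) = 0 := by
      rw [expand]; exact hT _
    have := hBW0 _ hTT
    rwa [sub_eq_zero] at this
  by_cases hq : ∃ i, κ.2.1 i ≠ 0
  · obtain ⟨i, hqi⟩ := hq
    obtain ⟨j, hj⟩ := exists_ne i
    set c : ℚ := ω.2.1 i / κ.2.1 i with hc
    have hs : ∀ k, ω.2.1 k = c * κ.2.1 k := by
      intro k
      by_cases hk : k = i
      · subst hk; rw [hc, div_mul_cancel₀ _ hqi]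
      · have hik : i ≠ k := fun h => hk h.symm
        have h3 := key i k hik (κ.2.1 k) (-κ.2.1 i) 0 0 0
          (by simp) (by simp only [map_zero, LinearMap.zero_apply]; ring)
        simp only [mul_zero, add_zero, map_zero, LinearMap.zero_apply] at h3
        rw [hc, div_mul_eq_mul_div, eq_div_iff hqi]
        linear_combination -h3
    have hroff : ∀ k, k ≠ i → ω.1 k = c * κ.1 k := by
      intro k hk
      have hik : i ≠ k := fun h => hk h.symm
      have h3 := key i k hik (-κ.1 k) 0 0 (κ.2.1 i) 0
        (by simp) (by simp only [map_zero, LinearMap.zero_apply]; ring)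
      simp only [zero_mul, mul_zero, add_zero, zero_add, map_zero,
        LinearMap.zero_apply] at h3
      rw [hs i] at h3
      have h5 : ω.1 k * κ.2.1 i = (c * κ.1 k) * κ.2.1 i := by linear_combination h3
      exact mul_right_cancel₀ hqi h5
    have hri : ω.1 i = c * κ.1 i := by
      by_cases hqj : κ.2.1 j ≠ 0
      · have h3 := key i j hj.symm 0 (-κ.1 i) (κ.2.1 j) 0 0
          (by simp) (by simp only [map_zero, LinearMap.zero_apply]; ring)
        simp only [zero_mul, mul_zero, add_zero, zero_add, map_zero,
          LinearMap.zero_apply] at h3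
        rw [hs j] at h3
        have h5 : ω.1 i * κ.2.1 j = (c * κ.1 i) * κ.2.1 j := by linear_combination h3
        exact mul_right_cancel₀ hqj h5
      · push_neg at hqj
        by_cases hpj : κ.1 j ≠ 0
        · have h3 := key i j hj.symm 0 0 (κ.1 j) (-κ.1 i) 0
            (by simp) (by simp only [map_zero, LinearMap.zero_apply]; ring)
          simp only [zero_mul, mul_zero, add_zero, zero_add, map_zero,
            LinearMap.zero_apply] at h3
          rw [hroff j hj] at h3
          have h5 : ω.1 i * κ.1 j = (c * κ.1 i) * κ.1 j := by linear_combination h3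
          exact mul_right_cancel₀ hpj h5
        · push_neg at hpj
          have h3 := key i j hj.symm (-κ.1 i) (κ.1 i) (κ.2.1 i) (κ.2.1 i) 0
            (by simp only [map_zero, LinearMap.zero_apply]; ring)
            (by rw [hqj, hpj]; simp only [map_zero, LinearMap.zero_apply]; ring)
          simp only [map_zero, LinearMap.zero_apply, add_zero] at h3
          rw [hs i, hs j, hroff j hj, hqj, hpj] at h3
          have h5 : ω.1 i * κ.2.1 i = (c * κ.1 i) * κ.2.1 i := by linear_combination h3
          exact mul_right_cancel₀ hqi h5
    have hr : ∀ k, ω.1 k = c * κ.1 k := by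
      intro k
      by_cases hk : k = i
      · subst hk; exact hri
      · exact hroff k hk
    have hU : ω.2.2 = c • κ.2.2 := by
      apply hU_of
      intro T
      have e1 : BW ((2*κ.2.1 i) • T) ((2*κ.2.1 i) • T)
          = (2*κ.2.1 i) * ((2*κ.2.1 i) * BW T T) := by
        simp only [map_smul, LinearMap.smul_apply, smul_eq_mul]
      have e2 : BW ((2*κ.2.1 i) • T) κ.2.2 = (2*κ.2.1 i) * BW T κ.2.2 := by
        simp only [map_smul, LinearMap.smul_apply, smul_eq_mul]
      have e3 : BW ((2*κ.2.1 i) • T) ω.2.2 = (2*κ.2.1 i) * BW T ω.2.2 := by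
        simp only [map_smul, LinearMap.smul_apply, smul_eq_mul]
      have h3 := key i j hj.symm
        (-(κ.2.1 j - 2 * κ.1 j * BW T T + 2 * BW T κ.2.2)) (κ.2.1 i)
        0 (-2 * κ.2.1 i * BW T T) ((2*κ.2.1 i) • T)
        (by rw [e1]; ring) (by rw [e2]; ring)
      rw [e3, hs i, hs j, hr j] at h3
      have h5 : (BW T ω.2.2 - c * BW T κ.2.2) * (2*κ.2.1 i) = 0 := by
        linear_combination h3
      rcases mul_eq_zero.mp h5 with h | h
      · exact h
      · exact absurd (by linarith : κ.2.1 i = 0) hqi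
    exact final c hr hs hU
  · push_neg at hq
    have hs0 : ∀ k, ω.2.1 k = 0 := by
      intro k
      obtain ⟨m, hm⟩ := exists_ne k
      have h3 := key k m hm.symm 1 0 0 0 0 (by simp)
        (by simp only [map_zero, LinearMap.zero_apply]; rw [hq k]; ring)
      simpa using h3
    by_cases hp : ∃ i, κ.1 i ≠ 0
    · obtain ⟨i, hpi⟩ := hp
      obtain ⟨j, hj⟩ := exists_ne i
      set c : ℚ := ω.1 i / κ.1 i with hc
      have hr : ∀ k, ω.1 k = c * κ.1 k := by
        intro k
        by_cases hk : k = i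
        · subst hk; rw [hc, div_mul_cancel₀ _ hpi]
        · have hik : i ≠ k := fun h => hk h.symm
          have h3 := key i k hik 0 0 (-κ.1 k) (κ.1 i) 0
            (by simp) (by simp only [map_zero, LinearMap.zero_apply]; ring)
          simp only [zero_mul, zero_add, map_zero, LinearMap.zero_apply, add_zero] at h3
          rw [hc, div_mul_eq_mul_div, eq_div_iff hpi]
          linear_combination h3
      have hU : ω.2.2 = c • κ.2.2 := by
        apply hU_of
        intro T
        have e1 : BW ((2*κ.1 i) • T) ((2*κ.1 i) • T)
            = (2*κ.1 i) * ((2*κ.1 i) * BW T T) := by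
          simp only [map_smul, LinearMap.smul_apply, smul_eq_mul]
        have e2 : BW ((2*κ.1 i) • T) κ.2.2 = (2*κ.1 i) * BW T κ.2.2 := by
          simp only [map_smul, LinearMap.smul_apply, smul_eq_mul]
        have e3 : BW ((2*κ.1 i) • T) ω.2.2 = (2*κ.1 i) * BW T ω.2.2 := by
          simp only [map_smul, LinearMap.smul_apply, smul_eq_mul]
        have h3 := key i j hj.symm 0 (-2 * κ.1 i * BW T T)
          (-(κ.1 j + 2 * BW T κ.2.2)) (κ.1 i) ((2*κ.1 i) • T)
          (by rw [e1]; ring)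
          (by rw [e2, hq j]; ring)
        rw [e3, hs0 j, hr i, hr j] at h3
        have h5 : (BW T ω.2.2 - c * BW T κ.2.2) * (2*κ.1 i) = 0 := by
          linear_combination h3
        rcases mul_eq_zero.mp h5 with h | h
        · exact h
        · exact absurd (by linarith : κ.1 i = 0) hpi
      exact final c hr (fun k => by rw [hs0 k, hq k, mul_zero]) hU
    · push_neg at hp
      have hr0 : ∀ k, ω.1 k = 0 := by
        intro k
        obtain ⟨m, hm⟩ := exists_ne k
        have h3 := key k m hm.symm 0 0 1 0 0 (by simp)
          (by simp only [map_zero, LinearMap.zero_apply]; rw [hp k]; ring)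
        simpa using h3
      obtain ⟨i0, j0, hij0⟩ := exists_pair_ne (Fin N)
      by_cases hS : κ.2.2 = 0
      · have hU : ω.2.2 ≠ 0 := by
          intro hU0
          apply hω 0
          rw [zero_smul]
          refine Prod.ext (funext fun k => ?_) (Prod.ext (funext fun k => ?_) ?_)
          · simpa using hr0 k
          · simpa using hs0 k
          · simpa using hU0
        have h3 := key i0 j0 hij0 1 0 (-BW ω.2.2 ω.2.2 / 2) 0 ω.2.2
          (by ring) (by rw [hp i0, hp j0, hq i0, hq j0, hS]; simp)
        rw [hs0 i0, hr0 i0] at h3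
        simp only [one_mul, zero_mul, mul_zero, zero_add, add_zero, mul_one] at h3
        exact hU (hBW0 _ h3)
      · set c : ℚ := BW κ.2.2 ω.2.2 / BW κ.2.2 κ.2.2 with hc
        have hSS : BW κ.2.2 κ.2.2 ≠ 0 := fun h => hS (hBW0 _ h)
        have hBTU : ∀ T : W, BW T κ.2.2 = 0 → BW T ω.2.2 = 0 := by
          intro T hTS0
          have h3 := key i0 j0 hij0 1 0 (-BW T T / 2) 0 T
            (by ring) (by rw [hp i0, hp j0, hq i0, hq j0, hTS0]; ring)
          rw [hs0 i0, hr0 i0] at h3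
          simpa using h3
        have expand : ∀ X : W, BW X (ω.2.2 - c • κ.2.2)
            = BW X ω.2.2 - c * BW X κ.2.2 :=
          fun X => by rw [map_sub, map_smul, smul_eq_mul]
        have hTS : BW (ω.2.2 - c • κ.2.2) κ.2.2 = 0 := by
          rw [hsymm, expand, hsymm κ.2.2 ω.2.2, hsymm κ.2.2 κ.2.2]
          rw [hsymm ω.2.2 κ.2.2]
          rw [hc, div_mul_cancel₀ _ hSS, sub_self]
        have hTU := hBTU _ hTS
        have hTT : BW (ω.2.2 - c • κ.2.2) (ω.2.2 - c • κ.2.2) = 0 := by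
          rw [expand, hTU, hTS]; ring
        have hU : ω.2.2 = c • κ.2.2 := by
          have := hBW0 _ hTT
          rwa [sub_eq_zero] at this
        exact final c (fun k => by rw [hr0 k, hp k, mul_zero])
          (fun k => by rw [hs0 k, hq k, mul_zero]) hU
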